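/- Let K be a group such that every topology on K making it a T1 topological group is the discrete topology, and let D be a finite group. Then every topology on the direct product K × D making it a T1 topological group is the discrete topology. -/

import Mathlib

/-- If every `T1` topological group topology on `K` is discrete and `D` is a finite group,
then every `T1` topological group topology on `K × D` is discrete. -/
theorem prod_with_finite_admits_only_discrete {K D : Type*} [Group K] [Group D] [Finite D]
    (hK : ∀ t : TopologicalSpace K, @IsTopologicalGroup K t _ → @T1Space K t → t = ⊥) :
    ∀ t : TopologicalSpace (K × D), @IsTopologicalGroup (K × D) t _ → @T1Space (K × D) t →
      t = ⊥ := by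
  intro t ht hT1
  letI := t
  haveI := ht
  haveI := hT1
  haveI : T2Space (K × D) :=
    (IsTopologicalGroup.t2Space_iff_one_closed).mpr isClosed_singleton
  -- the induced topology on `K` via `k ↦ (k, 1)`
  let f : K →* K × D := MonoidHom.inl K D
  let tK : TopologicalSpace K := t.induced f
  haveI htK : @IsTopologicalGroup K tK _ := topologicalGroup_induced f
  have hf_inj : Function.Injective f := fun a b hab => congrArg Prod.fst hab
  haveI hT1K : @T1Space K tK :=
    @Topology.IsEmbedding.t1Space K (K × D) tK t _ f ⟨⟨rfl⟩, hf_inj⟩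
  haveI hKdisc : @DiscreteTopology K tK := ⟨hK tK htK hT1K⟩
  -- the subgroup `K × {1}`
  let H : Subgroup (K × D) := (MonoidHom.snd K D).ker
  -- it is discrete
  haveI : DiscreteTopology H := by
    let g : H → K := fun x => x.1.1
    have hg_inj : Function.Injective g := by
      intro a b hab
      have h2 : a.1.2 = b.1.2 := by
        have ha : a.1.2 = 1 := a.2
        have hb : b.1.2 = 1 := b.2
        rw [ha, hb]
      exact Subtype.ext (Prod.ext hab h2)
    have hind : (instTopologicalSpaceSubtype : TopologicalSpace H) = tK.induced g := by
      show t.induced (Subtype.val) = (t.induced f).induced g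
      rw [induced_compose]
      congr 1
      funext x
      have hx : x.1.2 = 1 := x.2
      show x.1 = (x.1.1, 1)
      exact Prod.ext rfl hx
    exact @Topology.IsEmbedding.discreteTopology H K g _ tK hKdisc ⟨⟨hind⟩, hg_inj⟩
  -- hence closed, hence (being of finite index) open
  have hHclosed : IsClosed (H : Set (K × D)) := Subgroup.isClosed_of_discrete
  haveI : H.FiniteIndex := Subgroup.finiteIndex_ker _
  have hHopen : IsOpen (H : Set (K × D)) :=
    Subgroup.isOpen_of_isClosed_of_finiteIndex H hHclosed
  -- therefore `{1}` is open in `K × D`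
  have h1 : IsOpen ({(1 : K × D)} : Set (K × D)) := by
    have hs : IsOpen ({(⟨1, H.one_mem⟩ : H)} : Set H) := isOpen_discrete _
    have := hHopen.isOpenMap_subtype_val _ hs
    simpa using this
  haveI := discreteTopology_of_isOpen_singleton_one h1
  exact DiscreteTopology.eq_bot
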